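/- The assignment S_c ↦ π(c) is a well-defined bijection from the set of Φ-strata onto the lattice points of the half-open zonotope: there is a bijection β from 𝒮 = { S ⊆ ℝ^n/φ⁻¹(ℤ^k) : ∃ c ∈ ℤ^k, S̃_c ≠ ∅ and S = S_c } onto Z ∩ π(ℤ^k) such that β(S_c) = π(c) whenever S̃_c ≠ ∅. -/

import Mathlib

/-- The linear map `φ : ℝⁿ → ℝᵏ` given by pairing with the integer vectors `v j`. -/
noncomputable def phiMap {n k : ℕ} (v : Fin k → Fin n → ℤ) :
    (Fin n → ℝ) →ₗ[ℝ] (Fin k → ℝ) where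
  toFun u := fun j => ∑ i, u i * (v j i : ℝ)
  map_add' u w := by
    funext j
    simp [add_mul, Finset.sum_add_distrib]
  map_smul' r u := by
    funext j
    simp [Finset.mul_sum, mul_assoc]

/-- The map `Φ : ℝⁿ → ℤᵏ`, `Φ(u)_j = ⌈⟨u, v_j⟩⌉`. -/
noncomputable def PhiMap {n k : ℕ} (v : Fin k → Fin n → ℤ) (u : Fin n → ℝ) : Fin k → ℤ :=
  fun j => ⌈∑ i, u i * (v j i : ℝ)⌉

/-- `ℤᵏ` as an additive subgroup of `ℝᵏ`. -/
def intLattice (k : ℕ) : AddSubgroup (Fin k → ℝ) :=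
  AddSubgroup.pi Set.univ fun _ => AddSubgroup.zmultiples (1 : ℝ)

/-- The subgroup `φ⁻¹(ℤᵏ)` of `ℝⁿ`. -/
noncomputable def latticePre {n k : ℕ} (v : Fin k → Fin n → ℤ) : AddSubgroup (Fin n → ℝ) :=
  (intLattice k).comap (phiMap v).toAddMonoidHom

lemma PhiMap_eq_ceil {n k : ℕ} (v : Fin k → Fin n → ℤ) (u : Fin n → ℝ) (j : Fin k) :
    PhiMap v u j = ⌈phiMap v u j⌉ := rfl

lemma mem_latticePre_iff {n k : ℕ} (v : Fin k → Fin n → ℤ) (u : Fin n → ℝ) :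
    u ∈ latticePre v ↔ ∀ j, ∃ m : ℤ, phiMap v u j = (m : ℝ) := by
  simp only [latticePre, AddSubgroup.mem_comap, intLattice, AddSubgroup.mem_pi,
    Set.mem_univ, forall_true_left, AddSubgroup.mem_zmultiples_iff, zsmul_eq_mul, mul_one]
  constructor
  · intro h j; obtain ⟨m, hm⟩ := h j; exact ⟨m, hm.symm⟩
  · intro h j; obtain ⟨m, hm⟩ := h j; exact ⟨m, hm.symm⟩

/-- Shifting a stratum by a preimage of an integer difference. -/
lemma stratum_subset {n k : ℕ} (v : Fin k → Fin n → ℤ) (c c' : Fin k → ℤ) (w : Fin n → ℝ)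
    (hw : ∀ j, phiMap v w j = (c j : ℝ) - (c' j : ℝ)) :
    (QuotientAddGroup.mk '' {y : Fin n → ℝ | PhiMap v y = c} :
        Set ((Fin n → ℝ) ⧸ latticePre v)) ⊆
      QuotientAddGroup.mk '' {y : Fin n → ℝ | PhiMap v y = c'} := by
  have hwL : w ∈ latticePre v := by
    rw [mem_latticePre_iff]
    intro j
    exact ⟨c j - c' j, by rw [hw j]; push_cast; ring⟩
  rintro _ ⟨x, hx, rfl⟩
  refine ⟨x - w, ?_, ?_⟩
  · rw [Set.mem_setOf_eq] at hx ⊢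
    funext j
    have hx' : ⌈phiMap v x j⌉ = c j := congrFun hx j
    have h1 : phiMap v (x - w) j = phiMap v x j - ((c j - c' j : ℤ) : ℝ) := by
      rw [map_sub]
      simp only [Pi.sub_apply, hw j]
      push_cast; ring
    rw [PhiMap_eq_ceil, h1, Int.ceil_sub_intCast, hx']
    ring
  · apply (QuotientAddGroup.eq (s := latticePre v)).mpr
    simpa using hwL

theorem stmt4 {n k : ℕ} (v : Fin k → Fin n → ℤ) :
    ∃ β : Set ((Fin n → ℝ) ⧸ latticePre v) → (Fin k → ℝ) ⧸ LinearMap.range (phiMap v),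
      Set.BijOn β
        {S : Set ((Fin n → ℝ) ⧸ latticePre v) | ∃ c : Fin k → ℤ,
          ({y : Fin n → ℝ | PhiMap v y = c}).Nonempty ∧
          S = QuotientAddGroup.mk '' {y : Fin n → ℝ | PhiMap v y = c}}
        (((LinearMap.range (phiMap v)).mkQ '' {x : Fin k → ℝ | ∀ j, x j ∈ Set.Ico (0 : ℝ) 1}) ∩
         ((LinearMap.range (phiMap v)).mkQ '' {x : Fin k → ℝ | ∀ j, ∃ m : ℤ, x j = (m : ℝ)})) ∧
      ∀ c : Fin k → ℤ, ({y : Fin n → ℝ | PhiMap v y = c}).Nonempty →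
        β (QuotientAddGroup.mk '' {y : Fin n → ℝ | PhiMap v y = c}) =
          (LinearMap.range (phiMap v)).mkQ (fun j => (c j : ℝ)) := by
  classical
  set L := LinearMap.range (phiMap v) with hL
  -- notation for strata
  set St : (Fin k → ℤ) → Set ((Fin n → ℝ) ⧸ latticePre v) :=
    fun c => QuotientAddGroup.mk '' {y : Fin n → ℝ | PhiMap v y = c} with hSt
  -- key well-definedness lemma
  have key : ∀ c c' : Fin k → ℤ, ({y : Fin n → ℝ | PhiMap v y = c}).Nonempty →
      St c = St c' → L.mkQ (fun j => (c j : ℝ)) = L.mkQ (fun j => (c' j : ℝ)) := by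
    intro c c' ⟨x, hx⟩ hSS
    have hxmem : (QuotientAddGroup.mk x : (Fin n → ℝ) ⧸ latticePre v) ∈ St c' := by
      rw [← hSS]; exact ⟨x, hx, rfl⟩
    obtain ⟨y, hy, hxy⟩ := hxmem
    have hsub : x - y ∈ latticePre v := by
      have h1 : y - x ∈ latticePre v := by
        have := (QuotientAddGroup.eq (s := latticePre v)).mp hxy.symm
        simpa [neg_add_eq_sub] using this
      simpa using neg_mem h1
    rw [mem_latticePre_iff] at hsub
    -- φ(x) - φ(y) is an integer vector, and equals c - c'
    have hcc : ∀ j, (c j : ℝ) - (c' j : ℝ) = phiMap v (x - y) j := by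
      intro j
      obtain ⟨m, hm⟩ := hsub j
      have hxj : ⌈phiMap v x j⌉ = c j := congrFun hx j
      have hyj : ⌈phiMap v y j⌉ = c' j := congrFun hy j
      have hxy' : phiMap v x j = phiMap v y j + (m : ℝ) := by
        have : phiMap v x j - phiMap v y j = (m : ℝ) := by
          have := hm; rwa [map_sub] at this
        linarith
      have : c j = c' j + m := by
        rw [← hxj, ← hyj, hxy', Int.ceil_add_intCast]
      rw [this, hm]
      push_cast; ring
    rw [Submodule.mkQ_apply, Submodule.mkQ_apply, Submodule.Quotient.eq]
    exact ⟨x - y, by funext j; exact (hcc j).symm⟩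
  -- the map β
  set β : Set ((Fin n → ℝ) ⧸ latticePre v) → (Fin k → ℝ) ⧸ L :=
    fun S => if h : ∃ c : Fin k → ℤ,
        ({y : Fin n → ℝ | PhiMap v y = c}).Nonempty ∧ S = St c
      then L.mkQ (fun j => ((h.choose j : ℤ) : ℝ)) else 0 with hβdef
  have hβ : ∀ c : Fin k → ℤ, ({y : Fin n → ℝ | PhiMap v y = c}).Nonempty →
      β (St c) = L.mkQ (fun j => (c j : ℝ)) := by
    intro c hc
    have h : ∃ c' : Fin k → ℤ,
        ({y : Fin n → ℝ | PhiMap v y = c'}).Nonempty ∧ St c = St c' := ⟨c, hc, rfl⟩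
    rw [hβdef]
    simp only [dif_pos h]
    exact key h.choose c h.choose_spec.1 h.choose_spec.2.symm
  refine ⟨β, ⟨?_, ?_, ?_⟩, hβ⟩
  · -- MapsTo
    rintro S ⟨c, hc, rfl⟩
    rw [hβ c hc]
    constructor
    · -- in the zonotope
      obtain ⟨u, hu⟩ := hc
      refine ⟨(fun j => (c j : ℝ)) - phiMap v u, ?_, ?_⟩
      · intro j
        have hcj : ⌈phiMap v u j⌉ = c j := congrFun hu j
        constructor
        · have := Int.le_ceil (phiMap v u j)
          rw [hcj] at this
          simpa using this
        · have := Int.ceil_lt_add_one (phiMap v u j)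
          rw [hcj] at this
          simp only [Pi.sub_apply]
          linarith
      · rw [Submodule.mkQ_apply, Submodule.mkQ_apply, Submodule.Quotient.eq]
        exact ⟨-u, by funext j; simp⟩
    · exact ⟨fun j => (c j : ℝ), fun j => ⟨c j, rfl⟩, rfl⟩
  · -- InjOn
    rintro S ⟨c, hc, rfl⟩ S' ⟨c', hc', rfl⟩ hββ
    rw [hβ c hc, hβ c' hc'] at hββ
    rw [Submodule.mkQ_apply, Submodule.mkQ_apply, Submodule.Quotient.eq] at hββ
    obtain ⟨w, hw⟩ := hββ
    have hw' : ∀ j, phiMap v w j = (c j : ℝ) - (c' j : ℝ) := by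
      intro j; exact congrFun hw j
    have hw'' : ∀ j, phiMap v (-w) j = (c' j : ℝ) - (c j : ℝ) := by
      intro j; rw [map_neg]; simp [hw' j]
    exact Set.Subset.antisymm (stratum_subset v c c' w hw') (stratum_subset v c' c (-w) hw'')
  · -- SurjOn
    rintro z ⟨⟨x, hx, hxz⟩, ⟨y, hy, hyz⟩⟩
    choose c hcy using hy
    have hyc : y = fun j => (c j : ℝ) := funext hcy
    -- x - y ∈ range φ
    have hxy : (fun j => (c j : ℝ)) - x ∈ L := by
      rw [← Submodule.Quotient.eq]
      rw [Submodule.mkQ_apply] at hxz hyz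
      rw [← hyc, hyz, hxz]
    obtain ⟨u, hu⟩ := hxy
    have huc : PhiMap v u = c := by
      funext j
      rw [PhiMap_eq_ceil]
      have huj : phiMap v u j = (c j : ℝ) - x j := by
        rw [hu]; simp
      rw [huj, Int.ceil_eq_iff]  -- needs side condition? no: Int.ceil_eq_iff is an iff with z
      constructor
      · linarith [(hx j).2]
      · linarith [(hx j).1]
    refine ⟨St c, ⟨c, ⟨u, huc⟩, rfl⟩, ?_⟩
    rw [hβ c ⟨u, huc⟩, ← hyz, hyc]
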